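/- Let n be a positive integer and let A be an n×n matrix with integer entries such that every complex root of the characteristic polynomial of A has absolute value 1. Then there exist positive integers ℓ and m such that (A^ℓ − I)^m = 0, where I is the n×n identity matrix. -/

import Mathlib

open scoped IntermediateField

/-- An integer matrix all of whose complex eigenvalues have absolute value 1
satisfies `(A^ℓ - I)^m = 0` for some positive integers `ℓ`, `m`. -/
theorem stmt_1 (n : ℕ) (hn : 0 < n) (A : Matrix (Fin n) (Fin n) ℤ)
    (h : ∀ z : ℂ, Polynomial.aeval z A.charpoly = 0 → ‖z‖ = 1) :
    ∃ ℓ m : ℕ, 0 < ℓ ∧ 0 < m ∧ (A ^ ℓ - 1) ^ m = 0 := by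
  classical
  set p := A.charpoly with hp
  have hpm : p.Monic := A.charpoly_monic
  set P : Polynomial ℂ := p.map (Int.castRingHom ℂ) with hP
  have hPm : P.Monic := hpm.map _
  -- every root of `P` is a root of unity
  have key : ∀ z ∈ P.roots, ∃ k : ℕ, 0 < k ∧ z ^ k = 1 := by
    intro z hz
    have hz0 : Polynomial.aeval z p = 0 := by
      have := Polynomial.isRoot_of_mem_roots hz
      rwa [Polynomial.aeval_def, ← Polynomial.eval_map]
    have hzi : IsIntegral ℤ z := ⟨p, hpm, hz0⟩
    have halg : IsIntegral ℚ z := hzi.tower_top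
    haveI : FiniteDimensional ℚ ℚ⟮z⟯ := IntermediateField.adjoin.finiteDimensional halg
    set x : ℚ⟮z⟯ := IntermediateField.AdjoinSimple.gen ℚ z with hx
    have hxz : (algebraMap ℚ⟮z⟯ ℂ) x = z := rfl
    have hxi : IsIntegral ℤ x := by
      rwa [← isIntegral_algebraMap_iff (algebraMap ℚ⟮z⟯ ℂ).injective, hxz]
    have hmineq : minpoly ℚ x = minpoly ℚ z := by
      conv_rhs => rw [← hxz]
      exact (minpoly.algebraMap_eq (algebraMap ℚ⟮z⟯ ℂ).injective x).symm
    have hdvd : minpoly ℚ z ∣ p.map (Int.castRingHom ℚ) := by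
      apply minpoly.dvd ℚ z
      rw [Polynomial.aeval_def, Polynomial.eval₂_map]
      have : (Int.castRingHom ℂ) = (algebraMap ℚ ℂ).comp (Int.castRingHom ℚ) := by
        ext; simp
      rw [Polynomial.aeval_def] at hz0
      rw [show (algebraMap ℚ ℂ).comp (Int.castRingHom ℚ) = algebraMap ℤ ℂ from by ext; simp]
      exact hz0
    have hconj : ∀ φ : ℚ⟮z⟯ →+* ℂ, ‖φ x‖ = 1 := by
      intro φ
      have h1 : Polynomial.aeval (φ x) (minpoly ℚ x) = 0 := by
        have := Polynomial.aeval_algHom_apply φ.toRatAlgHom x (minpoly ℚ x)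
        simp only [minpoly.aeval, map_zero] at this
        exact this
      have h2 : Polynomial.aeval (φ x) (minpoly ℚ z) = 0 := hmineq ▸ h1
      have h3 : Polynomial.aeval (φ x) p = 0 := by
        obtain ⟨q, hq⟩ := hdvd
        have : Polynomial.aeval (φ x) (p.map (Int.castRingHom ℚ)) = 0 := by
          rw [hq, map_mul, h2, zero_mul]
        rw [Polynomial.aeval_def, Polynomial.eval₂_map,
          RingHom.ext_int ((algebraMap ℚ ℂ).comp (Int.castRingHom ℚ)) (algebraMap ℤ ℂ)] at this
        rwa [Polynomial.aeval_def]
      have := h (φ x) h3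
      exact this
    haveI : NumberField ℚ⟮z⟯ := ⟨⟩
    obtain ⟨k, hk, hxk⟩ :=
      NumberField.Embeddings.pow_eq_one_of_norm_eq_one ℚ⟮z⟯ ℂ hxi hconj
    refine ⟨k, hk, ?_⟩
    have := congrArg (algebraMap ℚ⟮z⟯ ℂ) hxk
    rwa [map_pow, hxz, map_one] at this
  -- choose a common exponent ℓ
  let kf : ℂ → ℕ := fun z => if hz : z ∈ P.roots then (key z hz).choose else 1
  have hkf : ∀ z ∈ P.roots, 0 < kf z ∧ z ^ kf z = 1 := by
    intro z hz
    simp only [kf, dif_pos hz]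
    exact ⟨(key z hz).choose_spec.1, (key z hz).choose_spec.2⟩
  set ℓ : ℕ := ∏ z ∈ P.roots.toFinset, kf z with hℓ
  have hℓpos : 0 < ℓ := by
    apply Finset.prod_pos
    intro z hz
    exact (hkf z (Multiset.mem_toFinset.mp hz)).1
  have hroot : ∀ z ∈ P.roots, z ^ ℓ = 1 := by
    intro z hz
    obtain ⟨c, hc⟩ := Finset.dvd_prod_of_mem kf (Multiset.mem_toFinset.mpr hz)
    rw [hℓ, hc, pow_mul, (hkf z hz).2, one_pow]
  -- P divides (X^ℓ - 1)^n
  set Q : Polynomial ℂ := (Polynomial.X ^ ℓ - 1) ^ n with hQ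
  have hsplit : P = (P.roots.map fun a => Polynomial.X - Polynomial.C a).prod :=
    (IsAlgClosed.splits P).eq_prod_roots_of_monic hPm
  have hcard : P.roots.card ≤ n := by
    have h1 : P.roots.card ≤ P.natDegree := P.card_roots'
    have h2 : P.natDegree = n := by
      rw [hP, (hpm).natDegree_map, hp, Matrix.charpoly_natDegree_eq_dim, Fintype.card_fin]
    omega
  have hPQ : P ∣ Q := by
    have hdvd1 : (P.roots.map fun a => Polynomial.X - Polynomial.C a).prod ∣
        (P.roots.map fun _ => Polynomial.X ^ ℓ - 1).prod := by
      apply Multiset.prod_dvd_prod_of_dvd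
      intro z hz
      rw [Polynomial.dvd_iff_isRoot]
      simp [Polynomial.IsRoot, hroot z hz]
    have heq : (P.roots.map fun _ : ℂ => Polynomial.X ^ ℓ - 1).prod =
        (Polynomial.X ^ ℓ - 1 : Polynomial ℂ) ^ P.roots.card := by
      rw [Multiset.map_const', Multiset.prod_replicate]
    rw [hsplit]
    calc (P.roots.map fun a => Polynomial.X - Polynomial.C a).prod
        ∣ (Polynomial.X ^ ℓ - 1 : Polynomial ℂ) ^ P.roots.card := heq ▸ hdvd1
      _ ∣ Q := pow_dvd_pow _ hcard
  -- apply Cayley–Hamilton over ℂ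
  set B : Matrix (Fin n) (Fin n) ℂ := A.map (Int.castRingHom ℂ) with hB
  have hCH : Polynomial.aeval B P = 0 := by
    rw [hP, ← Matrix.charpoly_map]
    exact Matrix.aeval_self_charpoly B
  have hQB : Polynomial.aeval B Q = 0 := by
    obtain ⟨q, hq⟩ := hPQ
    rw [hq, map_mul, hCH, zero_mul]
  have hBval : Polynomial.aeval B Q = (B ^ ℓ - 1) ^ n := by
    rw [hQ]
    simp [map_pow, map_sub]
  have hBzero : (B ^ ℓ - 1) ^ n = 0 := by rw [← hBval]; exact hQB
  -- descend to ℤ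
  refine ⟨ℓ, n, hℓpos, hn, ?_⟩
  have hmap : ((Int.castRingHom ℂ).mapMatrix) ((A ^ ℓ - 1) ^ n) = (B ^ ℓ - 1) ^ n := by
    rw [map_pow, map_sub, map_pow, map_one, RingHom.mapMatrix_apply, hB]
  have h0 : ((Int.castRingHom ℂ).mapMatrix) ((A ^ ℓ - 1) ^ n) = 0 := by
    rw [hmap, hBzero]
  ext i j
  have := congrFun (congrFun h0 i) j
  simp only [RingHom.mapMatrix_apply, Matrix.map_apply, Matrix.zero_apply, eq_intCast] at this ⊢
  exact_mod_cast this
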